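/- Let a, b, e ∈ ℝ with e = 0, and let α₁, α₂, α₃ : ℝ → ℝ be continuous functions with α₁(t) + α₂(t) ≥ l > -1 for all t ≥ 0, for some constant l. Then along any solution (x(t), y(t), z(t)) of the system ẋ = (ax+by+xz)(1+α₁) + x(a+z)α₂ + yα₃, ẏ = (-bx+ay+yz)(1+α₁) + y(a+z)α₂ - xα₃, ż = (-x²-y²-z²)(1+α₁+α₂), the function V(t) = -z(t)³ satisfies V̇(t) ≥ 3(1+l)·z(t)²·(x(t)² + y(t)² + z(t)²) ≥ 0 for all t ≥ 0. -/

import Mathlib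

theorem stmt6 (a b e l : ℝ) (he : e = 0)
    (α₁ α₂ α₃ : ℝ → ℝ)
    (hc1 : Continuous α₁) (hc2 : Continuous α₂) (hc3 : Continuous α₃)
    (hl : -1 < l) (hlb : ∀ t : ℝ, 0 ≤ t → l ≤ α₁ t + α₂ t)
    (x y z : ℝ → ℝ)
    (hx : ∀ t, HasDerivAt x ((a*x t + b*y t + x t * z t)*(1 + α₁ t)
        + x t*(a + z t)*α₂ t + y t * α₃ t) t)
    (hy : ∀ t, HasDerivAt y ((-b*x t + a*y t + y t * z t)*(1 + α₁ t)
        + y t*(a + z t)*α₂ t - x t * α₃ t) t)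
    (hz : ∀ t, HasDerivAt z ((-x t^2 - y t^2 - z t^2)*(1 + α₁ t + α₂ t)) t) :
    ∀ t : ℝ, 0 ≤ t →
      3*(1+l)*z t^2*(x t^2 + y t^2 + z t^2) ≤ deriv (fun s => -(z s)^3) t ∧
      0 ≤ 3*(1+l)*z t^2*(x t^2 + y t^2 + z t^2) := by
  intro t ht
  have hd : HasDerivAt (fun s => -(z s)^3)
      (3 * z t^2 * (x t^2 + y t^2 + z t^2) * (1 + α₁ t + α₂ t)) t := by
    have : HasDerivAt (fun s => -(z s)^3) _ t := ((hz t).pow 3).neg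
    convert this using 1
    norm_num
    ring
  rw [hd.deriv]
  have hnn : (0:ℝ) ≤ 3 * z t^2 * (x t^2 + y t^2 + z t^2) := by positivity
  have hle : 1 + l ≤ 1 + α₁ t + α₂ t := by linarith [hlb t ht]
  constructor
  · nlinarith
  · nlinarith
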